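/- Let ε ≥ 0, ζ > 0, and let ỹ_k(σ), ỹ_k(ρ) be positive reals with e^{−ε} ≤ ỹ_k(ρ)/ỹ_k(σ) ≤ e^{ε} for all k, and let ŷ_k be estimates with |ŷ_k − ỹ_k(σ)| ≤ ζ for all k. If ŷ_C − ζ > e^{2ε}·max_{k≠C}(ŷ_k + ζ), then ỹ_C(ρ) > ỹ_k(ρ) for all k ≠ C. -/
import Mathlib

theorem stmt11 (ε ζ : ℝ) (hε : 0 ≤ ε) (hζ : 0 < ζ) (K : ℕ) (hK : 2 ≤ K)
    (yσ yρ yhat : Fin K → ℝ) (hσ : ∀ k, 0 < yσ k) (hρ : ∀ k, 0 < yρ k)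
    (hdp : ∀ k, Real.exp (-ε) ≤ yρ k / yσ k ∧ yρ k / yσ k ≤ Real.exp ε)
    (hest : ∀ k, |yhat k - yσ k| ≤ ζ) (C : Fin K)
    (hmargin : ∀ k, k ≠ C → yhat C - ζ > Real.exp (2 * ε) * (yhat k + ζ)) :
    ∀ k, k ≠ C → yρ C > yρ k := by
  intro k hk
  have h1 : Real.exp (-ε) * yσ C ≤ yρ C := by
    have := (hdp C).1
    have h := mul_le_mul_of_nonneg_right this (hσ C).le
    rwa [div_mul_cancel₀ _ (hσ C).ne'] at h
  have h2 : yρ k ≤ Real.exp ε * yσ k := by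
    have := (hdp k).2
    have h := mul_le_mul_of_nonneg_right this (hσ k).le
    rwa [div_mul_cancel₀ _ (hσ k).ne'] at h
  have hC : yhat C - ζ ≤ yσ C := by
    have := abs_le.1 (hest C); linarith [this.1]
  have hkb : yσ k ≤ yhat k + ζ := by
    have := abs_le.1 (hest k); linarith [this.2]
  have hm := hmargin k hk
  have hepos : 0 < Real.exp (-ε) := Real.exp_pos _
  have key : Real.exp (-ε) * (yhat C - ζ) > Real.exp (-ε) * (Real.exp (2*ε) * (yhat k + ζ)) :=
    by exact (mul_lt_mul_iff_right₀ hepos).2 hm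
  have hrw : Real.exp (-ε) * Real.exp (2*ε) = Real.exp ε := by
    rw [← Real.exp_add]; ring_nf
  have hζpos : 0 < yhat k + ζ := lt_of_lt_of_le (hσ k) hkb |>.trans_le (le_refl _)
  calc yρ C ≥ Real.exp (-ε) * yσ C := h1
    _ ≥ Real.exp (-ε) * (yhat C - ζ) := by nlinarith
    _ > Real.exp (-ε) * (Real.exp (2*ε) * (yhat k + ζ)) := key
    _ = Real.exp ε * (yhat k + ζ) := by rw [← mul_assoc, hrw]
    _ ≥ Real.exp ε * yσ k := by nlinarith [Real.exp_pos ε]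
    _ ≥ yρ k := h2
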